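/- (Sharp/Popoviciu symmetry) Let r, s be coprime positive integers and let R(n) denote the number of representations n = r x + s y with nonnegative integers x, y. Then for every integer n with 0 < n < rs and n not divisible by r or by s, R(n) + R(rs - n) = 1. -/
import Mathlib

lemma card_rep_aux (r s : ℕ) (hr : 0 < r) (hs : 0 < s) (hcop : Nat.Coprime r s)
    (m : ℕ) (hm : m < r * s) (x0 : ℕ) (hx0 : x0 < s)
    (hmod : r * x0 ≡ m [MOD s]) :
    Nat.card {p : ℕ × ℕ // r * p.1 + s * p.2 = m} =
      if r * x0 ≤ m then 1 else 0 := by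
  have key : ∀ p : ℕ × ℕ, r * p.1 + s * p.2 = m → p.1 = x0 := by
    intro p hp
    have hx : p.1 < s := by
      have h1 : r * p.1 < r * s := by omega
      exact Nat.lt_of_mul_lt_mul_left h1
    have h2 : r * p.1 ≡ m [MOD s] := by
      unfold Nat.ModEq
      rw [← hp, mul_comm s p.2, Nat.add_mul_mod_self_right]
    have h3 : r * p.1 ≡ r * x0 [MOD s] := h2.trans hmod.symm
    have h4 : p.1 ≡ x0 [MOD s] :=
      Nat.ModEq.cancel_left_of_coprime (by rwa [Nat.gcd_comm]) h3
    have := h4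
    unfold Nat.ModEq at this
    rwa [Nat.mod_eq_of_lt hx, Nat.mod_eq_of_lt hx0] at this
  split_ifs with hle
  · obtain ⟨y, hy⟩ := (Nat.modEq_iff_dvd' hle).mp hmod
    have he : r * x0 + s * y = m := by omega
    rw [Nat.card_eq_one_iff_unique]
    constructor
    · constructor
      rintro ⟨⟨px, py⟩, hp⟩ ⟨⟨qx, qy⟩, hq⟩
      have hp1 := key (px, py) hp
      have hq1 := key (qx, qy) hq
      simp only at hp1 hq1
      subst hp1; subst hq1
      simp only at hp hq
      have hp2 : s * py = s * qy := by omega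
      have : py = qy := Nat.eq_of_mul_eq_mul_left hs hp2
      subst this; rfl
    · exact ⟨⟨(x0, y), he⟩⟩
  · have : IsEmpty {p : ℕ × ℕ // r * p.1 + s * p.2 = m} := by
      constructor
      rintro ⟨p, hp⟩
      have hk := key p hp
      rw [hk] at hp
      omega
    exact Nat.card_of_isEmpty

theorem popoviciu_symmetry (r s : ℕ) (hr : 0 < r) (hs : 0 < s)
    (hcop : Nat.Coprime r s) (n : ℕ) (h0 : 0 < n) (h1 : n < r * s)
    (hnr : ¬ r ∣ n) (hns : ¬ s ∣ n) :
    Nat.card {p : ℕ × ℕ // r * p.1 + s * p.2 = n} +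
      Nat.card {p : ℕ × ℕ // r * p.1 + s * p.2 = r * s - n} = 1 := by
  haveI : NeZero s := ⟨hs.ne'⟩
  set x0 : ℕ := ((r : ZMod s)⁻¹ * (n : ZMod s)).val with hx0def
  have hx0lt : x0 < s := ZMod.val_lt _
  have hmod : r * x0 ≡ n [MOD s] := by
    rw [← ZMod.natCast_eq_natCast_iff]
    push_cast
    rw [ZMod.natCast_val, ZMod.cast_id, ← mul_assoc,
      ZMod.coe_mul_inv_eq_one r hcop, one_mul]
  have hx0ne : x0 ≠ 0 := by
    intro h
    apply hns
    rw [← Nat.modEq_zero_iff_dvd]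
    have := hmod.symm
    rwa [h, mul_zero] at this
  have hrx0lt : r * x0 < r * s := by
    exact (Nat.mul_lt_mul_left hr).mpr hx0lt
  have hne : r * x0 ≠ n := by
    intro h
    exact hnr ⟨x0, h.symm⟩
  have hmod' : r * (s - x0) ≡ r * s - n [MOD s] := by
    apply Nat.ModEq.add_right_cancel hmod
    have heq : r * (s - x0) + r * x0 = (r * s - n) + n := by
      rw [Nat.mul_sub]; omega
    rw [heq]
  have hx0lt' : s - x0 < s := by omega
  have hmn : r * s - n < r * s := by omega
  rw [card_rep_aux r s hr hs hcop n h1 x0 hx0lt hmod,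
    card_rep_aux r s hr hs hcop (r * s - n) hmn (s - x0) hx0lt' hmod']
  have hrsx0 : r * (s - x0) = r * s - r * x0 := by rw [Nat.mul_sub]
  split_ifs with ha hb hb <;> omega
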